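/- Let E be a real inner product space, let I ⊆ ℝ be an interval, let μ : ℝ → ℝ, and let c : ℝ → E be twice differentiable on I with c''(t) = μ(t)² • c(t) and c'(t) ≠ 0 for all t ∈ I. Then the function t ↦ ⟪c'(t), c(t)⟫ / ‖c'(t)‖ is monotone nondecreasing on I. -/

import Mathlib

open scoped RealInnerProductSpace

/-- Monotonicity along the radial ODE `c'' = μ² • c`: the function
`t ↦ ⟪c'(t), c(t)⟫ / ‖c'(t)‖` is nondecreasing on the interval `I`. -/
theorem stmt_3 (E : Type*) [NormedAddCommGroup E] [InnerProductSpace ℝ E]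
    (I : Set ℝ) (hI : I.OrdConnected) (μ : ℝ → ℝ) (c c' c'' : ℝ → E)
    (hc : ∀ t ∈ I, HasDerivAt c (c' t) t)
    (hc' : ∀ t ∈ I, HasDerivAt c' (c'' t) t)
    (hode : ∀ t ∈ I, c'' t = μ t ^ 2 • c t)
    (hne : ∀ t ∈ I, c' t ≠ 0) :
    MonotoneOn (fun t => ⟪c' t, c t⟫ / ‖c' t‖) I := by
  have hconv : Convex ℝ I := convex_iff_ordConnected.2 hI
  -- key: at each t ∈ I, the function has nonnegative derivative
  have key : ∀ t ∈ I, HasDerivAt (fun t => ⟪c' t, c t⟫ / ‖c' t‖)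
      (((⟪c' t, c' t⟫ + ⟪c'' t, c t⟫) * ‖c' t‖ -
        ⟪c' t, c t⟫ * (⟪c' t, c'' t⟫ / ‖c' t‖)) / ‖c' t‖ ^ 2) t := by
    intro t ht
    have hn : (0:ℝ) < ‖c' t‖ := norm_pos_iff.2 (hne t ht)
    have hg : HasDerivAt (fun t => ⟪c' t, c t⟫) (⟪c' t, c' t⟫ + ⟪c'' t, c t⟫) t :=
      (hc' t ht).inner ℝ (hc t ht)
    have hh : HasDerivAt (fun t => ‖c' t‖) (⟪c' t, c'' t⟫ / ‖c' t‖) t := by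
      have h1 : HasDerivAt (fun t => ⟪c' t, c' t⟫) (⟪c' t, c'' t⟫ + ⟪c'' t, c' t⟫) t :=
        (hc' t ht).inner ℝ (hc' t ht)
      have h2 : ⟪c' t, c' t⟫ ≠ 0 := by
        rw [real_inner_self_eq_norm_sq]; positivity
      have := (Real.hasDerivAt_sqrt h2).comp t h1
      simp only [Function.comp_def] at this
      have heq : (fun t => Real.sqrt ⟪c' t, c' t⟫) = fun t => ‖c' t‖ := by
        funext s
        rw [real_inner_self_eq_norm_sq, Real.sqrt_sq (norm_nonneg _)]
      rw [heq] at this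
      refine this.congr_deriv ?_
      rw [real_inner_self_eq_norm_sq, Real.sqrt_sq (norm_nonneg _),
        real_inner_comm (c'' t) (c' t)]
      field_simp
      ring
    exact hg.div hh hn.ne'
  apply monotoneOn_of_hasDerivWithinAt_nonneg hconv
  · exact fun t ht => ((key t ht).continuousAt).continuousWithinAt
  · exact fun t ht => ((key t (interior_subset ht)).hasDerivWithinAt)
  · intro t ht'
    have ht := interior_subset ht'
    have hn : (0:ℝ) < ‖c' t‖ := norm_pos_iff.2 (hne t ht)
    apply div_nonneg _ (by positivity)
    rw [hode t ht]
    have hCS : ⟪c' t, c t⟫ * ⟪c' t, c t⟫ ≤ ‖c' t‖ ^ 2 * ‖c t‖ ^ 2 := by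
      have h1 := abs_real_inner_le_norm (c' t) (c t)
      calc ⟪c' t, c t⟫ * ⟪c' t, c t⟫ ≤ |⟪c' t, c t⟫| * |⟪c' t, c t⟫| := by
            rw [← abs_mul, abs_mul_self]
        _ ≤ (‖c' t‖ * ‖c t‖) * (‖c' t‖ * ‖c t‖) :=
            mul_le_mul h1 h1 (abs_nonneg _) (by positivity)
        _ = ‖c' t‖ ^ 2 * ‖c t‖ ^ 2 := by ring
    rw [real_inner_smul_right, real_inner_smul_left]
    rw [sub_nonneg]
    have h3 : ⟪c' t, c t⟫ * (μ t ^ 2 * ⟪c' t, c t⟫ / ‖c' t‖)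
        = μ t ^ 2 * (⟪c' t, c t⟫ * ⟪c' t, c t⟫) / ‖c' t‖ := by ring
    rw [h3, div_le_iff₀ hn]
    have hnorm : ⟪c' t, c' t⟫ = ‖c' t‖ ^ 2 := real_inner_self_eq_norm_sq _
    have hnormc : ⟪c t, c t⟫ = ‖c t‖ ^ 2 := real_inner_self_eq_norm_sq _
    rw [hnorm, hnormc]
    nlinarith [sq_nonneg (μ t), sq_nonneg (‖c' t‖ ^ 2), mul_le_mul_of_nonneg_left hCS (sq_nonneg (μ t))]
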